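/- Let W be a group, χ an automorphism of W with χ ∘ χ = id, and M, K normal subgroups of W of finite index such that [W : M] ≠ [W : K], [M : M ∩ χ(M)] = [W : M], and [K : K ∩ χ(K)] = [W : K]. Then M ∩ K ≠ χ(M) ∩ χ(K). -/

import Mathlib

/-- Totally chiral case: if `[W : M] ≠ [W : K]`, `[M : M ∩ χ(M)] = [W : M]` and
`[K : K ∩ χ(K)] = [W : K]`, then `M ∩ K ≠ χ(M) ∩ χ(K)`. -/
theorem stmt_7 {W : Type*} [Group W] (χ : W ≃* W) (hχ : ∀ w, χ (χ w) = w)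
    (M K : Subgroup W) [M.Normal] [K.Normal] [M.FiniteIndex] [K.FiniteIndex]
    (hne : M.index ≠ K.index)
    (hM : (M.map χ.toMonoidHom).relIndex M = M.index)
    (hK : (K.map χ.toMonoidHom).relIndex K = K.index) :
    M ⊓ K ≠ M.map χ.toMonoidHom ⊓ K.map χ.toMonoidHom := by
  intro heq
  have hMpos : 0 < M.index := Nat.pos_of_ne_zero Subgroup.FiniteIndex.index_ne_zero
  have hKpos : 0 < K.index := Nat.pos_of_ne_zero Subgroup.FiniteIndex.index_ne_zero
  have hMKpos : 0 < (M ⊓ K).index :=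
    Nat.pos_of_ne_zero Subgroup.FiniteIndex.index_ne_zero
  -- index of χM ⊓ M is M.index ^ 2
  have hMi : (M.map χ.toMonoidHom ⊓ M).index = M.index * M.index := by
    have h := Subgroup.relIndex_mul_index (inf_le_right :
      M.map χ.toMonoidHom ⊓ M ≤ M)
    rw [Subgroup.inf_relIndex_right, hM] at h; exact h.symm
  have hKi : (K.map χ.toMonoidHom ⊓ K).index = K.index * K.index := by
    have h := Subgroup.relIndex_mul_index (inf_le_right :
      K.map χ.toMonoidHom ⊓ K ≤ K)
    rw [Subgroup.inf_relIndex_right, hK] at h; exact h.symm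
  -- M ⊓ K ≤ χM ⊓ M and ≤ χK ⊓ K
  have h1 : M ⊓ K ≤ M.map χ.toMonoidHom ⊓ M := by
    refine le_inf ?_ inf_le_left
    rw [heq]; exact inf_le_left
  have h2 : M ⊓ K ≤ K.map χ.toMonoidHom ⊓ K := by
    refine le_inf ?_ inf_le_right
    rw [heq]; exact inf_le_right
  have d1 : (M.map χ.toMonoidHom ⊓ M).index ∣ (M ⊓ K).index :=
    Subgroup.index_dvd_of_le h1
  have d2 : (K.map χ.toMonoidHom ⊓ K).index ∣ (M ⊓ K).index :=
    Subgroup.index_dvd_of_le h2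
  have hb : (M ⊓ K).index ≤ M.index * K.index := Subgroup.index_inf_le
  have le1 : M.index * M.index ≤ M.index * K.index := by
    calc M.index * M.index = (M.map χ.toMonoidHom ⊓ M).index := hMi.symm
    _ ≤ (M ⊓ K).index := Nat.le_of_dvd hMKpos d1
    _ ≤ M.index * K.index := hb
  have le2 : K.index * K.index ≤ M.index * K.index := by
    calc K.index * K.index = (K.map χ.toMonoidHom ⊓ K).index := hKi.symm
    _ ≤ (M ⊓ K).index := Nat.le_of_dvd hMKpos d2
    _ ≤ M.index * K.index := hb
  have : M.index ≤ K.index := Nat.le_of_mul_le_mul_left le1 hMpos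
  have : K.index ≤ M.index := by
    have := Nat.le_of_mul_le_mul_right le2 hKpos
    -- le2 : K.index * K.index ≤ M.index * K.index
    exact this
  omega
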